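/- Let d ≥ 1, m1 > 0, c12 > 0, n2 > 0, T12 > 0 and u12 ∈ ℝ^d. Let f1 : ℝ^d → ℝ be smooth, strictly positive and Gaussian-dominated, with n1 = ∫ f1 dv, u1 = (1/n1)∫ v f1 dv and T1 = (1/(d n1))∫ m1|v−u1|² f1 dv. Define Q12(v) = c12·n2·div_v( ∇_v((T12/m1) f1)(v) + (v−u12) f1(v) ). Then the energy exchange term satisfies ∫_{ℝ^d} (m1/2)|v|² Q12(v) dv = c12 n1 n2 d (T12 − T1) − c12 m1 n1 n2 u1·(u1 − u12). -/

import Mathlib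

open MeasureTheory Real

noncomputable section

namespace EnergyExchangeAux

lemma integrable_gauss (d : ℕ) {b : ℝ} (hb : 0 < b) :
    Integrable (fun v : EuclideanSpace ℝ (Fin d) => Real.exp (-b * ‖v‖ ^ 2)) := by
  have h := (GaussianFourier.integrable_cexp_neg_mul_sq_norm_add (V := EuclideanSpace ℝ (Fin d))
      (b := (b : ℂ)) (by simpa using hb) 0 0).norm
  convert h using 2 with v
  rw [Complex.norm_exp]
  congr 1
  rw [Complex.add_re, Complex.mul_re]
  simp [← Complex.ofReal_pow]

/-- `g` is polynomially bounded. -/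
def PolyBnd {d : ℕ} (g : EuclideanSpace ℝ (Fin d) → ℝ) : Prop :=
  ∃ K n, ∀ v, |g v| ≤ K * (1 + ‖v‖) ^ n

namespace PolyBnd
variable {d : ℕ} {g g₁ g₂ : EuclideanSpace ℝ (Fin d) → ℝ}

lemma nonneg_K {K : ℝ} {n : ℕ} (h : ∀ v : EuclideanSpace ℝ (Fin d), |g v| ≤ K * (1 + ‖v‖) ^ n) :
    0 ≤ K := by
  have := h 0
  simp at this
  exact le_trans (abs_nonneg _) this

lemma const (c : ℝ) : PolyBnd (fun _ : EuclideanSpace ℝ (Fin d) => c) :=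
  ⟨|c|, 0, fun v => by simp⟩

lemma norm : PolyBnd (fun v : EuclideanSpace ℝ (Fin d) => ‖v‖) :=
  ⟨1, 1, fun v => by rw [abs_of_nonneg (norm_nonneg v)]; simp⟩

lemma of_abs_le (hg : PolyBnd g₂) (h : ∀ v, |g₁ v| ≤ |g₂ v|) : PolyBnd g₁ := by
  obtain ⟨K, n, hK⟩ := hg
  exact ⟨K, n, fun v => (h v).trans (hK v)⟩

lemma abs_coord_le_norm (v : EuclideanSpace ℝ (Fin d)) (i : Fin d) : |v i| ≤ ‖v‖ := by
  have h := abs_real_inner_le_norm (EuclideanSpace.single i (1:ℝ)) v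
  simpa [EuclideanSpace.inner_single_left] using h

lemma coord (i : Fin d) : PolyBnd (fun v : EuclideanSpace ℝ (Fin d) => v i) :=
  norm.of_abs_le fun v => by
    simpa [abs_abs, abs_of_nonneg (norm_nonneg v)] using abs_coord_le_norm v i

lemma mul (h₁ : PolyBnd g₁) (h₂ : PolyBnd g₂) : PolyBnd (fun v => g₁ v * g₂ v) := by
  obtain ⟨K₁, n₁, hK₁⟩ := h₁
  obtain ⟨K₂, n₂, hK₂⟩ := h₂
  refine ⟨K₁ * K₂, n₁ + n₂, fun v => ?_⟩
  have h1 : (0:ℝ) ≤ 1 + ‖v‖ := by linarith [norm_nonneg v]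
  rw [abs_mul, pow_add, mul_mul_mul_comm]
  exact mul_le_mul (hK₁ v) (hK₂ v) (abs_nonneg _) (by have := nonneg_K hK₁; positivity)

lemma add (h₁ : PolyBnd g₁) (h₂ : PolyBnd g₂) : PolyBnd (fun v => g₁ v + g₂ v) := by
  obtain ⟨K₁, n₁, hK₁⟩ := h₁
  obtain ⟨K₂, n₂, hK₂⟩ := h₂
  refine ⟨K₁ + K₂, max n₁ n₂, fun v => ?_⟩
  have h1 : (1:ℝ) ≤ 1 + ‖v‖ := by linarith [norm_nonneg v]
  have e1 : (1 + ‖v‖) ^ n₁ ≤ (1 + ‖v‖) ^ (max n₁ n₂) := pow_le_pow_right₀ h1 (le_max_left _ _)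
  have e2 : (1 + ‖v‖) ^ n₂ ≤ (1 + ‖v‖) ^ (max n₁ n₂) := pow_le_pow_right₀ h1 (le_max_right _ _)
  calc |g₁ v + g₂ v| ≤ |g₁ v| + |g₂ v| := abs_add_le _ _
    _ ≤ K₁ * (1 + ‖v‖) ^ (max n₁ n₂) + K₂ * (1 + ‖v‖) ^ (max n₁ n₂) := by
        gcongr
        exacts [(hK₁ v).trans (by nlinarith [nonneg_K hK₁]),
          (hK₂ v).trans (by nlinarith [nonneg_K hK₂])]
    _ = (K₁ + K₂) * (1 + ‖v‖) ^ (max n₁ n₂) := by ring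

lemma sub (h₁ : PolyBnd g₁) (h₂ : PolyBnd g₂) : PolyBnd (fun v => g₁ v - g₂ v) := by
  have := h₁.add (h₂.of_abs_le (g₁ := fun v => -g₂ v) (fun v => by simp))
  exact this.of_abs_le fun v => by simp [sub_eq_add_neg]

lemma abs (h : PolyBnd g) : PolyBnd (fun v => |g v|) :=
  h.of_abs_le fun v => by simp [abs_abs]

end PolyBnd

/-- `h` is Gaussian-bounded with rate `a`. -/
def GaussBnd {d : ℕ} (a : ℝ) (h : EuclideanSpace ℝ (Fin d) → ℝ) : Prop :=
  ∃ g, PolyBnd g ∧ ∀ v, |h v| ≤ g v * Real.exp (-a * ‖v‖ ^ 2)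

namespace GaussBnd
variable {d : ℕ} {a : ℝ} {h h₁ h₂ : EuclideanSpace ℝ (Fin d) → ℝ}

lemma of_abs_le (hg : GaussBnd a h₂) (hle : ∀ v, |h₁ v| ≤ |h₂ v|) : GaussBnd a h₁ := by
  obtain ⟨g, hg, hbd⟩ := hg
  exact ⟨g, hg, fun v => (hle v).trans (hbd v)⟩

lemma add (hg₁ : GaussBnd a h₁) (hg₂ : GaussBnd a h₂) : GaussBnd a (fun v => h₁ v + h₂ v) := by
  obtain ⟨g₁, hg₁, hbd₁⟩ := hg₁
  obtain ⟨g₂, hg₂, hbd₂⟩ := hg₂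
  refine ⟨fun v => g₁ v + g₂ v, hg₁.add hg₂, fun v => ?_⟩
  calc |h₁ v + h₂ v| ≤ |h₁ v| + |h₂ v| := abs_add_le _ _
    _ ≤ g₁ v * Real.exp (-a * ‖v‖ ^ 2) + g₂ v * Real.exp (-a * ‖v‖ ^ 2) :=
        add_le_add (hbd₁ v) (hbd₂ v)
    _ = (g₁ v + g₂ v) * Real.exp (-a * ‖v‖ ^ 2) := by ring

lemma polyMul {p : EuclideanSpace ℝ (Fin d) → ℝ} (hp : PolyBnd p) (hg : GaussBnd a h) :
    GaussBnd a (fun v => p v * h v) := by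
  obtain ⟨g, hgp, hbd⟩ := hg
  refine ⟨fun v => |p v| * g v, hp.abs.mul hgp, fun v => ?_⟩
  rw [abs_mul, mul_assoc]
  exact mul_le_mul_of_nonneg_left (hbd v) (abs_nonneg _)

lemma mulPoly {p : EuclideanSpace ℝ (Fin d) → ℝ} (hg : GaussBnd a h) (hp : PolyBnd p) :
    GaussBnd a (fun v => h v * p v) :=
  (polyMul hp hg).of_abs_le fun v => le_of_eq (by rw [abs_mul, abs_mul, mul_comm])

lemma sub (hg₁ : GaussBnd a h₁) (hg₂ : GaussBnd a h₂) : GaussBnd a (fun v => h₁ v - h₂ v) := by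
  have hneg : GaussBnd a (fun v => -h₂ v) := hg₂.of_abs_le fun v => by simp
  exact (hg₁.add hneg).of_abs_le fun v => by simp [sub_eq_add_neg]

/-- Key integrability lemma. -/
lemma integrable_of_norm_le {F : Type*} [NormedAddCommGroup F]
    (ha : 0 < a) {s : EuclideanSpace ℝ (Fin d) → ℝ}
    (hs : GaussBnd a s) {f : EuclideanSpace ℝ (Fin d) → F} (hc : Continuous f)
    (hle : ∀ v, ‖f v‖ ≤ |s v|) : Integrable f := by
  obtain ⟨g, hg, hbd⟩ := hs
  obtain ⟨K, n, hK⟩ := hg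
  have hK0 : 0 ≤ K := PolyBnd.nonneg_K hK
  set M : ℝ := K * Real.exp ((n : ℝ) ^ 2 / (2 * a)) with hM
  refine Integrable.mono' (((integrable_gauss d (half_pos ha)).const_mul M)) hc.aestronglyMeasurable
    (Filter.Eventually.of_forall fun v => ?_)
  have ht : (0:ℝ) ≤ ‖v‖ := norm_nonneg v
  have key : (1 + ‖v‖) ^ n * Real.exp (-a * ‖v‖ ^ 2)
      ≤ Real.exp ((n : ℝ) ^ 2 / (2 * a)) * Real.exp (-(a/2) * ‖v‖ ^ 2) := by
    set t := ‖v‖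
    have h1 : (1 + t) ^ n ≤ Real.exp ((n : ℝ) * t) := by
      calc (1 + t) ^ n ≤ (Real.exp t) ^ n := by
            refine pow_le_pow_left₀ (by linarith) ?_ n
            linarith [Real.add_one_le_exp t]
        _ = Real.exp ((n : ℝ) * t) := by rw [← Real.exp_nat_mul]
    calc (1 + t) ^ n * Real.exp (-a * t ^ 2)
        ≤ Real.exp ((n:ℝ) * t) * Real.exp (-a * t ^ 2) :=
          mul_le_mul_of_nonneg_right h1 (Real.exp_nonneg _)
      _ = Real.exp ((n:ℝ) * t - a * t ^ 2) := by rw [← Real.exp_add]; ring_nf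
      _ ≤ Real.exp ((n : ℝ) ^ 2 / (2 * a) - (a/2) * t ^ 2) := by
          apply Real.exp_le_exp.mpr
          have hq : ((n:ℝ) * t - (a/2) * t^2) * (2 * a) ≤ (n:ℝ)^2 := by
            nlinarith [sq_nonneg (a * t - (n:ℝ))]
          have h2 : (n:ℝ) * t - (a/2) * t^2 ≤ (n:ℝ)^2 / (2*a) :=
            (le_div_iff₀ (by linarith)).mpr hq
          linarith
      _ = Real.exp ((n : ℝ) ^ 2 / (2 * a)) * Real.exp (-(a/2) * t ^ 2) := by
          rw [← Real.exp_add]; ring_nf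
  calc ‖f v‖ ≤ |s v| := hle v
    _ ≤ g v * Real.exp (-a * ‖v‖ ^ 2) := hbd v
    _ ≤ (K * (1 + ‖v‖) ^ n) * Real.exp (-a * ‖v‖ ^ 2) :=
        mul_le_mul_of_nonneg_right (le_trans (le_abs_self _) (hK v)) (Real.exp_nonneg _)
    _ = K * ((1 + ‖v‖) ^ n * Real.exp (-a * ‖v‖ ^ 2)) := by ring
    _ ≤ M * Real.exp (-(a/2) * ‖v‖ ^ 2) := by
        rw [hM, mul_assoc]
        exact mul_le_mul_of_nonneg_left key hK0

lemma integrable (ha : 0 < a) (hs : GaussBnd a h) (hc : Continuous h) : Integrable h :=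
  hs.integrable_of_norm_le ha hc fun v => by rw [Real.norm_eq_abs]

end GaussBnd
variable {d : ℕ}

lemma proj_fun_eq (i : Fin d) : (fun w : EuclideanSpace ℝ (Fin d) => w i)
    = ⇑(EuclideanSpace.proj (𝕜 := ℝ) i) := rfl

lemma hasFDerivAt_fderiv_apply {f : EuclideanSpace ℝ (Fin d) → ℝ}
    (hf : ContDiff ℝ (⊤ : ℕ∞) f) (u x : EuclideanSpace ℝ (Fin d)) :
    HasFDerivAt (fun w => fderiv ℝ f w u)
      ((ContinuousLinearMap.apply ℝ ℝ u).comp (fderiv ℝ (fderiv ℝ f) x)) x :=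
  (ContinuousLinearMap.apply ℝ ℝ u).hasFDerivAt.comp x
    (((hf.fderiv_right (m := (⊤:ℕ∞)) (by simp)).differentiable (by simp) x).hasFDerivAt)

lemma hasFDerivAt_phi (c : ℝ) (x : EuclideanSpace ℝ (Fin d)) :
    HasFDerivAt (fun v : EuclideanSpace ℝ (Fin d) => c * ‖v‖ ^ 2)
      (c • ((fderivInnerCLM ℝ (x, x)).comp ((ContinuousLinearMap.id ℝ _).prod
        (ContinuousLinearMap.id ℝ _)))) x := by
  have h : HasFDerivAt (fun v : EuclideanSpace ℝ (Fin d) => (inner ℝ v v : ℝ))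
      ((fderivInnerCLM ℝ (x, x)).comp ((ContinuousLinearMap.id ℝ _).prod
        (ContinuousLinearMap.id ℝ _))) x := (hasFDerivAt_id x).inner ℝ (hasFDerivAt_id x)
  have h2 := h.const_mul c
  refine h2.congr_of_eventuallyEq (Filter.Eventually.of_forall fun v => ?_)
  simp only [real_inner_self_eq_norm_sq]

lemma fderiv_phi_apply (c : ℝ) (x w : EuclideanSpace ℝ (Fin d)) :
    fderiv ℝ (fun v : EuclideanSpace ℝ (Fin d) => c * ‖v‖ ^ 2) x w
      = c * (2 * (inner ℝ x w : ℝ)) := by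
  rw [(hasFDerivAt_phi c x).fderiv]
  simp [fderivInnerCLM_apply, real_inner_comm x w]
  ring_nf
  exact Or.inl trivial

lemma differentiable_phi (c : ℝ) :
    Differentiable ℝ (fun v : EuclideanSpace ℝ (Fin d) => c * ‖v‖ ^ 2) :=
  fun x => (hasFDerivAt_phi c x).differentiableAt

end EnergyExchangeAux
end

open EnergyExchangeAux

noncomputable section

/-- Divergence of a vector field on `ℝ^d`. -/
def vdiv {d : ℕ} (F : EuclideanSpace ℝ (Fin d) → EuclideanSpace ℝ (Fin d))
    (v : EuclideanSpace ℝ (Fin d)) : ℝ :=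
  ∑ i, fderiv ℝ F v (EuclideanSpace.single i 1) i

/-- `f` is Gaussian-dominated: all derivatives of order `≤ 2` are bounded by
`C · exp(-a|v|²)` for some `C, a > 0`. -/
def GaussianDominated {d : ℕ} (f : EuclideanSpace ℝ (Fin d) → ℝ) : Prop :=
  ∃ C a : ℝ, 0 < C ∧ 0 < a ∧ ∀ (k : ℕ), k ≤ 2 → ∀ v,
    ‖iteratedFDeriv ℝ k f v‖ ≤ C * Real.exp (-a * ‖v‖ ^ 2)

/-- The Fokker–Planck operator `Q(v) = c · n · div_v(∇_v((T/m) f) + (v - u) f)(v)`. -/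
def QFP {d : ℕ} (c n m T : ℝ) (u : EuclideanSpace ℝ (Fin d))
    (f : EuclideanSpace ℝ (Fin d) → ℝ) (v : EuclideanSpace ℝ (Fin d)) : ℝ :=
  c * n * vdiv (fun w => gradient (fun y => (T / m) * f y) w + f w • (w - u)) v

/-- The energy exchange term of the mixture Fokker–Planck operator:
`∫ (m1/2)|v|² Q12 dv = c12 n1 n2 d (T12 - T1) - c12 m1 n1 n2 u1·(u1 - u12)`. -/
theorem energy_exchange_term
    (d : ℕ) (hd : 1 ≤ d) (m1 c12 n2 T12 : ℝ)
    (hm1 : 0 < m1) (hc12 : 0 < c12) (hn2 : 0 < n2) (hT12 : 0 < T12)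
    (u12 : EuclideanSpace ℝ (Fin d))
    (f1 : EuclideanSpace ℝ (Fin d) → ℝ)
    (hf1 : ContDiff ℝ (⊤ : ℕ∞) f1) (hf1pos : ∀ v, 0 < f1 v)
    (hf1G : GaussianDominated f1)
    (n1 : ℝ) (hn1 : n1 = ∫ v, f1 v)
    (u1 : EuclideanSpace ℝ (Fin d)) (hu1 : u1 = (1 / n1) • ∫ v, f1 v • v)
    (T1 : ℝ) (hT1 : T1 = (1 / ((d : ℝ) * n1)) * ∫ v, m1 * ‖v - u1‖ ^ 2 * f1 v)
    (Q12 : EuclideanSpace ℝ (Fin d) → ℝ) (hQ12 : Q12 = QFP c12 n2 m1 T12 u12 f1) :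
    (∫ v, (m1 / 2) * ‖v‖ ^ 2 * Q12 v)
      = c12 * n1 * n2 * (d : ℝ) * (T12 - T1)
        - c12 * m1 * n1 * n2 * (inner ℝ u1 (u1 - u12) : ℝ) := by
  classical
  obtain ⟨C, a, hC, ha, hCa⟩ := hf1G
  have hf1d : Differentiable ℝ f1 := hf1.differentiable (by simp)
  have hf1c : Continuous f1 := hf1.continuous
  have hDf1 : ContDiff ℝ (⊤ : ℕ∞) (fderiv ℝ f1) := hf1.fderiv_right (m := (⊤:ℕ∞)) (by simp)
  have hDf1d : Differentiable ℝ (fderiv ℝ f1) := hDf1.differentiable (by simp)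
  have hDf1c : Continuous (fderiv ℝ f1) := hDf1.continuous
  have hD2c : Continuous (fderiv ℝ (fderiv ℝ f1)) :=
    (hDf1.fderiv_right (m := (⊤:ℕ∞)) (by simp)).continuous
  -- pointwise Gaussian bounds
  have hb0 : ∀ v, |f1 v| ≤ C * Real.exp (-a * ‖v‖ ^ 2) := fun v => by
    have h := hCa 0 (by norm_num) v
    rwa [norm_iteratedFDeriv_zero, Real.norm_eq_abs] at h
  have hb1 : ∀ (w v : EuclideanSpace ℝ (Fin d)),
      |fderiv ℝ f1 v w| ≤ (C * ‖w‖) * Real.exp (-a * ‖v‖ ^ 2) := by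
    intro w v
    have h := hCa 1 (by norm_num) v
    have e : fderiv ℝ f1 v w = iteratedFDeriv ℝ 1 f1 v ![w] := by
      rw [iteratedFDeriv_one_apply]; simp
    rw [← Real.norm_eq_abs, e]
    calc ‖iteratedFDeriv ℝ 1 f1 v ![w]‖ ≤ ‖iteratedFDeriv ℝ 1 f1 v‖ * ∏ j, ‖(![w]) j‖ :=
          ContinuousMultilinearMap.le_opNorm _ _
      _ = ‖iteratedFDeriv ℝ 1 f1 v‖ * ‖w‖ := by simp
      _ ≤ (C * Real.exp (-a * ‖v‖ ^ 2)) * ‖w‖ := by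
          exact mul_le_mul_of_nonneg_right h (norm_nonneg w)
      _ = (C * ‖w‖) * Real.exp (-a * ‖v‖ ^ 2) := by ring
  have hb2 : ∀ (w w' v : EuclideanSpace ℝ (Fin d)),
      |fderiv ℝ (fderiv ℝ f1) v w w'| ≤ (C * (‖w‖ * ‖w'‖)) * Real.exp (-a * ‖v‖ ^ 2) := by
    intro w w' v
    have h := hCa 2 (by norm_num) v
    have e : fderiv ℝ (fderiv ℝ f1) v w w' = iteratedFDeriv ℝ 2 f1 v ![w, w'] := by
      rw [iteratedFDeriv_two_apply]; simp
    rw [← Real.norm_eq_abs, e]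
    calc ‖iteratedFDeriv ℝ 2 f1 v ![w, w']‖ ≤ ‖iteratedFDeriv ℝ 2 f1 v‖ * ∏ j, ‖(![w, w']) j‖ :=
          ContinuousMultilinearMap.le_opNorm _ _
      _ = ‖iteratedFDeriv ℝ 2 f1 v‖ * (‖w‖ * ‖w'‖) := by
          rw [Fin.prod_univ_two]; simp
      _ ≤ (C * Real.exp (-a * ‖v‖ ^ 2)) * (‖w‖ * ‖w'‖) :=
          mul_le_mul_of_nonneg_right h (by positivity)
      _ = (C * (‖w‖ * ‖w'‖)) * Real.exp (-a * ‖v‖ ^ 2) := by ring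
  -- GaussBnd atoms
  have g0 : GaussBnd a f1 := ⟨fun _ => C, PolyBnd.const C, hb0⟩
  have g1 : ∀ w, GaussBnd a (fun v => fderiv ℝ f1 v w) :=
    fun w => ⟨fun _ => C * ‖w‖, PolyBnd.const _, hb1 w⟩
  have g2 : ∀ w w', GaussBnd a (fun v => fderiv ℝ (fderiv ℝ f1) v w w') :=
    fun w w' => ⟨fun _ => C * (‖w‖ * ‖w'‖), PolyBnd.const _, hb2 w w'⟩
  -- continuity atoms
  have c1 : ∀ w, Continuous (fun v => fderiv ℝ f1 v w) :=
    fun w => hDf1c.clm_apply continuous_const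
  have c2 : ∀ w w', Continuous (fun v => fderiv ℝ (fderiv ℝ f1) v w w') :=
    fun w w' => (hD2c.clm_apply continuous_const).clm_apply continuous_const
  have ccoord : ∀ i : Fin d, Continuous (fun v : EuclideanSpace ℝ (Fin d) => v i) := by
    intro i; rw [proj_fun_eq i]; exact (EuclideanSpace.proj i).continuous

  -- notation
  set e : Fin d → EuclideanSpace ℝ (Fin d) := fun i => EuclideanSpace.single i (1:ℝ) with he
  have he_norm : ∀ i, ‖e i‖ = 1 := fun i => by simp [he, EuclideanSpace.norm_single]
  have he_app : ∀ i, (e i) i = 1 := fun i => by simp [he, EuclideanSpace.single_apply]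
  set c' : ℝ := T12 / m1 with hc'
  set Fi : Fin d → EuclideanSpace ℝ (Fin d) → ℝ :=
    fun i w => c' * fderiv ℝ f1 w (e i) + f1 w * (w i - u12 i) with hFi
  -- differentiability of the pieces
  have hGidiff : ∀ u, Differentiable ℝ (fun w : EuclideanSpace ℝ (Fin d) => fderiv ℝ f1 w u) :=
    fun u x => (hasFDerivAt_fderiv_apply hf1 u x).differentiableAt
  have hcoordd : ∀ i : Fin d, Differentiable ℝ (fun w : EuclideanSpace ℝ (Fin d) => w i) := by
    intro i; rw [proj_fun_eq i]; exact (EuclideanSpace.proj (𝕜 := ℝ) i).differentiable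
  have hFidiff : ∀ i, Differentiable ℝ (Fi i) := by
    intro i
    exact ((hGidiff (e i)).const_mul c').add (hf1d.mul ((hcoordd i).sub_const (u12 i)))
  -- the derivative of `Fi i` in direction `e i`
  have hFideriv : ∀ (i : Fin d) v, fderiv ℝ (Fi i) v (e i)
      = c' * fderiv ℝ (fderiv ℝ f1) v (e i) (e i)
        + (f1 v * 1 + (v i - u12 i) * fderiv ℝ f1 v (e i)) := by
    intro i v
    have h1 : HasFDerivAt (fun w => c' * fderiv ℝ f1 w (e i))
        (c' • ((ContinuousLinearMap.apply ℝ ℝ (e i)).comp (fderiv ℝ (fderiv ℝ f1) v))) v :=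
      (hasFDerivAt_fderiv_apply hf1 (e i) v).const_mul c'
    have h2 : HasFDerivAt (fun w : EuclideanSpace ℝ (Fin d) => w i - u12 i)
        ((EuclideanSpace.proj (𝕜 := ℝ) i : EuclideanSpace ℝ (Fin d) →L[ℝ] ℝ)) v := by
      have := ((EuclideanSpace.proj (𝕜 := ℝ) i).hasFDerivAt (x := v)).sub_const (u12 i)
      exact this
    have h3 : HasFDerivAt (fun w : EuclideanSpace ℝ (Fin d) => f1 w * (w i - u12 i))
        (f1 v • (EuclideanSpace.proj (𝕜 := ℝ) i : EuclideanSpace ℝ (Fin d) →L[ℝ] ℝ)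
          + (v i - u12 i) • fderiv ℝ f1 v) v := (hf1d v).hasFDerivAt.mul h2
    have h4 := (h1.add h3).fderiv
    rw [hFi]
    erw [h4]
    simp [ContinuousLinearMap.add_apply, ContinuousLinearMap.smul_apply,
      ContinuousLinearMap.comp_apply, ContinuousLinearMap.apply_apply, he_app i,
      PiLp.proj_apply, smul_eq_mul]
  -- rewrite Q12 via Fi
  have hQ : ∀ v, Q12 v = c12 * n2 * ∑ i, fderiv ℝ (Fi i) v (e i) := by
    intro v
    rw [hQ12]
    unfold QFP vdiv
    congr 1
    apply Finset.sum_congr rfl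
    intro i _
    set F : EuclideanSpace ℝ (Fin d) → EuclideanSpace ℝ (Fin d) :=
      fun w => gradient (fun y => (T12 / m1) * f1 y) w + f1 w • (w - u12) with hF
    have hgradeq : ∀ w, gradient (fun y => (T12 / m1) * f1 y) w
        = (InnerProductSpace.toDual ℝ (EuclideanSpace ℝ (Fin d))).symm
            (c' • fderiv ℝ f1 w) := by
      intro w
      rw [gradient]
      congr 1
      exact fderiv_const_mul (hf1d w) _
    have hFdiff : Differentiable ℝ F := by
      apply Differentiable.add
      · have : Differentiable ℝ (fun w : EuclideanSpace ℝ (Fin d) =>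
            (InnerProductSpace.toDual ℝ (EuclideanSpace ℝ (Fin d))).symm
              (c' • fderiv ℝ f1 w)) :=
          (InnerProductSpace.toDual ℝ (EuclideanSpace ℝ (Fin d))).symm.toContinuousLinearEquiv.differentiable.comp
            (hDf1d.const_smul c')
        exact fun x => ((this x).congr_of_eventuallyEq
          (Filter.Eventually.of_forall fun w => (hgradeq w)) :)
      · exact hf1d.smul (differentiable_id.sub_const u12)
    have hcoordF : (fun w => F w i) = Fi i := by
      funext w
      rw [hF, hFi]
      have : F w i = gradient (fun y => (T12 / m1) * f1 y) w i + f1 w * (w i - u12 i) := by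
        rw [hF]
        simp [PiLp.add_apply, PiLp.smul_apply, PiLp.sub_apply, smul_eq_mul]
      rw [hF] at this
      rw [this]
      congr 1
      · -- gradient coordinate
        rw [hgradeq w]
        have h5 : ∀ (L : StrongDual ℝ (EuclideanSpace ℝ (Fin d))),
            ((InnerProductSpace.toDual ℝ (EuclideanSpace ℝ (Fin d))).symm L) i = L (e i) := by
          intro L
          have h6 := InnerProductSpace.toDual_symm_apply (𝕜 := ℝ) (y := L)
            (x := EuclideanSpace.single i (1:ℝ))
          rw [← h6, real_inner_comm, EuclideanSpace.inner_single_left]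
          simp
        rw [h5]
        simp [smul_eq_mul]
    have hproj : fderiv ℝ F v (e i) i = fderiv ℝ (fun w => F w i) v (e i) := by
      have h7 := ((EuclideanSpace.proj (𝕜 := ℝ) i).hasFDerivAt (x := F v)).comp v
        (hFdiff v).hasFDerivAt
      have h8 : (fun w => F w i)
          = (⇑(EuclideanSpace.proj (𝕜 := ℝ) i)) ∘ F := rfl
      rw [h8, h7.fderiv]
      simp [PiLp.proj_apply]
    rw [hproj, hcoordF]

  -- the weight function
  set φ : EuclideanSpace ℝ (Fin d) → ℝ := fun v => (m1/2) * ‖v‖^2 with hφ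
  have hφdiff : Differentiable ℝ φ := differentiable_phi (m1/2)
  have hφc : Continuous φ := continuous_const.mul (continuous_norm.pow 2)
  have hφpoly : PolyBnd φ :=
    ((PolyBnd.const (m1/2)).mul (PolyBnd.norm.mul PolyBnd.norm)).of_abs_le
      (fun v => le_of_eq (by rw [hφ]; ring_nf))
  have hφd : ∀ (i : Fin d) v, fderiv ℝ φ v (e i) = m1 * v i := by
    intro i v
    rw [hφ, fderiv_phi_apply (m1/2) v (e i)]
    rw [he]
    simp [EuclideanSpace.inner_single_right]
    ring
  -- polynomial bounds for coordinates
  have coordsub : ∀ i : Fin d, PolyBnd (fun v : EuclideanSpace ℝ (Fin d) => v i - u12 i) :=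
    fun i => (PolyBnd.coord i).sub (PolyBnd.const (u12 i))
  have polyNormSq : PolyBnd (fun v : EuclideanSpace ℝ (Fin d) => ‖v‖^2) :=
    (PolyBnd.norm.mul PolyBnd.norm).of_abs_le (fun v => le_of_eq (by rw [sq]))
  have polyInner : ∀ c : EuclideanSpace ℝ (Fin d),
      PolyBnd (fun v : EuclideanSpace ℝ (Fin d) => (inner ℝ c v : ℝ)) := by
    intro c
    refine ((PolyBnd.const ‖c‖).mul PolyBnd.norm).of_abs_le (fun v => ?_)
    have h := abs_real_inner_le_norm c v
    rw [abs_mul, abs_of_nonneg (norm_nonneg c), abs_of_nonneg (norm_nonneg v)]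
    exact h
  -- Gaussian bounds / integrability of all relevant integrands
  have gbFi : ∀ i, GaussBnd a (Fi i) := by
    intro i
    rw [hFi]
    exact (GaussBnd.polyMul (PolyBnd.const c') (g1 (e i))).add (g0.mulPoly (coordsub i))
  have cFi : ∀ i, Continuous (Fi i) := by
    intro i
    rw [hFi]
    exact (continuous_const.mul (c1 (e i))).add (hf1c.mul ((ccoord i).sub continuous_const))
  have gbInner : ∀ i, GaussBnd a (fun v =>
      c' * fderiv ℝ (fderiv ℝ f1) v (e i) (e i)
        + (f1 v * 1 + (v i - u12 i) * fderiv ℝ f1 v (e i))) := by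
    intro i
    exact (GaussBnd.polyMul (PolyBnd.const c') (g2 (e i) (e i))).add
      ((g0.mulPoly (PolyBnd.const 1)).add (GaussBnd.polyMul (coordsub i) (g1 (e i))))
  have cInner : ∀ i, Continuous (fun v =>
      c' * fderiv ℝ (fderiv ℝ f1) v (e i) (e i)
        + (f1 v * 1 + (v i - u12 i) * fderiv ℝ f1 v (e i))) := by
    intro i
    exact (continuous_const.mul (c2 (e i) (e i))).add
      ((hf1c.mul continuous_const).add (((ccoord i).sub continuous_const).mul (c1 (e i))))
  have int_f1 : Integrable f1 := g0.integrable ha hf1c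
  have intP1 : ∀ i, Integrable (fun v => φ v * fderiv ℝ (Fi i) v (e i)) := by
    intro i
    have heq : (fun v => φ v * fderiv ℝ (Fi i) v (e i))
        = fun v => φ v * (c' * fderiv ℝ (fderiv ℝ f1) v (e i) (e i)
            + (f1 v * 1 + (v i - u12 i) * fderiv ℝ f1 v (e i))) :=
      funext fun v => by rw [hFideriv i v]
    rw [heq]
    exact (GaussBnd.polyMul hφpoly (gbInner i)).integrable ha (hφc.mul (cInner i))
  have intP2 : ∀ i, Integrable (fun v => fderiv ℝ φ v (e i) * Fi i v) := by
    intro i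
    have heq : (fun v => fderiv ℝ φ v (e i) * Fi i v) = fun v => (m1 * v i) * Fi i v :=
      funext fun v => by rw [hφd i v]
    rw [heq]
    exact (GaussBnd.polyMul ((PolyBnd.const m1).mul (PolyBnd.coord i)) (gbFi i)).integrable ha
      ((continuous_const.mul (ccoord i)).mul (cFi i))
  have intP3 : ∀ i, Integrable (fun v => φ v * Fi i v) := fun i =>
    (GaussBnd.polyMul hφpoly (gbFi i)).integrable ha (hφc.mul (cFi i))
  have int_b : ∀ i : Fin d, Integrable (fun x : EuclideanSpace ℝ (Fin d) =>
      x i * fderiv ℝ f1 x (e i)) := fun i =>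
    (GaussBnd.polyMul (PolyBnd.coord i) (g1 (e i))).integrable ha ((ccoord i).mul (c1 (e i)))
  have int_a : ∀ i : Fin d, Integrable (fun x : EuclideanSpace ℝ (Fin d) => x i * f1 x) :=
    fun i => (GaussBnd.polyMul (PolyBnd.coord i) g0).integrable ha ((ccoord i).mul hf1c)
  have hfdcoord : ∀ (i : Fin d) (x : EuclideanSpace ℝ (Fin d)),
      fderiv ℝ (fun w : EuclideanSpace ℝ (Fin d) => w i) x
        = (EuclideanSpace.proj (𝕜 := ℝ) i : EuclideanSpace ℝ (Fin d) →L[ℝ] ℝ) := by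
    intro i x
    rw [proj_fun_eq i]
    exact ContinuousLinearMap.fderiv _
  have int_c : ∀ i : Fin d, Integrable (fun x : EuclideanSpace ℝ (Fin d) =>
      fderiv ℝ (fun w : EuclideanSpace ℝ (Fin d) => w i) x (e i) * f1 x) := by
    intro i
    have heq : (fun x : EuclideanSpace ℝ (Fin d) =>
        fderiv ℝ (fun w : EuclideanSpace ℝ (Fin d) => w i) x (e i) * f1 x)
        = fun x => 1 * f1 x := by
      funext x
      rw [hfdcoord i x]
      simp [PiLp.proj_apply, he_app i]
    rw [heq]
    exact int_f1.congr (Filter.Eventually.of_forall fun x => by ring)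
  have intM : ∀ i : Fin d, Integrable (fun v => f1 v * (v i * (v i - u12 i))) := fun i =>
    (g0.mulPoly ((PolyBnd.coord i).mul (coordsub i))).integrable ha
      (hf1c.mul ((ccoord i).mul ((ccoord i).sub continuous_const)))
  have intN : Integrable (fun v => f1 v * ‖v‖^2) :=
    (g0.mulPoly polyNormSq).integrable ha (hf1c.mul (continuous_norm.pow 2))
  have intIc : ∀ c : EuclideanSpace ℝ (Fin d), Integrable (fun v => f1 v * (inner ℝ c v : ℝ)) :=
    fun c => (g0.mulPoly (polyInner c)).integrable ha
      (hf1c.mul (continuous_const.inner continuous_id))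
  have hIv : Integrable (fun v : EuclideanSpace ℝ (Fin d) => f1 v • v) := by
    refine (GaussBnd.polyMul PolyBnd.norm g0).integrable_of_norm_le ha (hf1c.smul continuous_id)
      (fun v => le_of_eq ?_)
    rw [norm_smul, abs_mul, abs_of_nonneg (norm_nonneg v), Real.norm_eq_abs, mul_comm]
  -- basic positivity
  have hn1pos : 0 < n1 := by
    rw [hn1]
    rw [integral_pos_iff_support_of_nonneg (fun v => (hf1pos v).le) int_f1]
    rw [Set.eq_univ_of_forall (fun v => (hf1pos v).ne') (s := Function.support f1)]
    exact isOpen_univ.measure_pos volume ⟨0, trivial⟩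
  have hn1ne : n1 ≠ 0 := hn1pos.ne'
  have hdpos : (0:ℝ) < d := by exact_mod_cast hd
  -- first moment
  have hvec : (∫ v, f1 v • v) = n1 • u1 := by
    rw [hu1, smul_smul, mul_one_div, div_self hn1ne, one_smul]
  have hmomc : ∀ c : EuclideanSpace ℝ (Fin d),
      (∫ v, f1 v * (inner ℝ c v : ℝ)) = n1 * (inner ℝ c u1 : ℝ) := by
    intro c
    have h := integral_inner (𝕜 := ℝ) hIv c
    simp only [real_inner_smul_right] at h
    rw [h, hvec, real_inner_smul_right]
  -- second moment
  have hmom2 : m1 * (∫ v, f1 v * ‖v‖^2) = d * n1 * T1 + m1 * n1 * ‖u1‖^2 := by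
    have hJ : (∫ v, m1 * ‖v - u1‖ ^ 2 * f1 v) = (d : ℝ) * n1 * T1 := by
      rw [hT1]
      field_simp
    have hexp : (fun v : EuclideanSpace ℝ (Fin d) => m1 * ‖v - u1‖ ^ 2 * f1 v)
        = fun v => m1 * (f1 v * ‖v‖^2) + ((-(2*m1)) * (f1 v * (inner ℝ u1 v : ℝ))
            + (m1 * ‖u1‖^2) * f1 v) := by
      funext v
      rw [norm_sub_sq_real, real_inner_comm v u1]
      ring
    rw [hexp] at hJ
    have hB : Integrable (fun v : EuclideanSpace ℝ (Fin d) =>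
        (-(2*m1)) * (f1 v * (inner ℝ u1 v : ℝ)) + (m1 * ‖u1‖^2) * f1 v) :=
      ((intIc u1).const_mul _).add (int_f1.const_mul _)
    rw [integral_add (intN.const_mul m1) hB,
      integral_add ((intIc u1).const_mul _) (int_f1.const_mul _),
      integral_const_mul, integral_const_mul, integral_const_mul, hmomc u1, ← hn1,
      real_inner_self_eq_norm_sq] at hJ
    linarith [hJ]
  -- integration by parts, step 2
  have IBP2 : ∀ i : Fin d, (∫ v : EuclideanSpace ℝ (Fin d), v i * fderiv ℝ f1 v (e i)) = - n1 := by
    intro i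
    have h := integral_mul_fderiv_eq_neg_fderiv_mul_of_integrable
      (f := fun w : EuclideanSpace ℝ (Fin d) => w i) (g := f1) (v := e i)
      (int_c i) (int_b i) (int_a i) (fun x _ => hcoordd i x) (fun x _ => hf1d x)
    rw [h]
    have heq : (fun x : EuclideanSpace ℝ (Fin d) =>
        fderiv ℝ (fun w : EuclideanSpace ℝ (Fin d) => w i) x (e i) * f1 x)
        = fun x => f1 x := by
      funext x
      rw [hfdcoord i x]
      simp [PiLp.proj_apply, he_app i]
    rw [heq, ← hn1]
  -- integration by parts, step 1, and per-coordinate identity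
  have key : ∀ i : Fin d, (∫ v, φ v * fderiv ℝ (Fi i) v (e i))
      = T12 * n1 - m1 * (∫ v, f1 v * (v i * (v i - u12 i))) := by
    intro i
    rw [integral_mul_fderiv_eq_neg_fderiv_mul_of_integrable (intP2 i) (intP1 i) (intP3 i)
      (fun x _ => hφdiff x) (fun x _ => hFidiff i x)]
    have heq : (fun v => fderiv ℝ φ v (e i) * Fi i v)
        = fun v => (m1 * c') * (v i * fderiv ℝ f1 v (e i))
            + m1 * (f1 v * (v i * (v i - u12 i))) := by
      funext v
      rw [hφd i v, hFi]
      ring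
    rw [heq, integral_add (((int_b i).const_mul _)) ((intM i).const_mul m1),
      integral_const_mul, integral_const_mul, IBP2 i]
    have hm1c' : m1 * c' = T12 := by
      rw [hc']
      field_simp
    rw [hm1c']
    ring
  -- assembling
  have main1 : (∫ v, (m1 / 2) * ‖v‖ ^ 2 * Q12 v)
      = c12 * n2 * ∑ i, ∫ v, φ v * fderiv ℝ (Fi i) v (e i) := by
    have heq : (fun v => (m1 / 2) * ‖v‖ ^ 2 * Q12 v)
        = fun v => c12 * n2 * ∑ i, φ v * fderiv ℝ (Fi i) v (e i) := by
      funext v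
      rw [hQ v, ← Finset.mul_sum, hφ]
      ring
    rw [heq, integral_const_mul, integral_finset_sum _ (fun i _ => intP1 i)]
  have hsumM : (∑ i : Fin d, ∫ v, f1 v * (v i * (v i - u12 i)))
      = (∫ v, f1 v * ‖v‖^2) - n1 * (inner ℝ u12 u1 : ℝ) := by
    rw [← integral_finset_sum _ (fun i _ => intM i)]
    have heq : (fun v : EuclideanSpace ℝ (Fin d) => ∑ i, f1 v * (v i * (v i - u12 i)))
        = fun v => f1 v * ‖v‖^2 - f1 v * (inner ℝ u12 v : ℝ) := by
      funext v
      rw [← Finset.mul_sum]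
      have hnorm : ‖v‖^2 = ∑ i, v i * v i := by
        rw [EuclideanSpace.real_norm_sq_eq]
        simp [sq]
      have hinner : (inner ℝ u12 v : ℝ) = ∑ i, u12 i * v i := by
        simp [PiLp.inner_apply, RCLike.inner_apply, conj_trivial]
        exact Finset.sum_congr rfl fun i _ => mul_comm _ _
      rw [hnorm, hinner, ← mul_sub, ← Finset.sum_sub_distrib]
      congr 1
      apply Finset.sum_congr rfl
      intro i _
      ring
    rw [heq, integral_sub intN (intIc u12), hmomc u12]
  -- final computation
  rw [main1]
  have hsum : (∑ i : Fin d, ∫ v, φ v * fderiv ℝ (Fi i) v (e i))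
      = (d : ℝ) * (T12 * n1) - m1 * ((∫ v, f1 v * ‖v‖^2) - n1 * (inner ℝ u12 u1 : ℝ)) := by
    calc (∑ i : Fin d, ∫ v, φ v * fderiv ℝ (Fi i) v (e i))
        = ∑ i : Fin d, (T12 * n1 - m1 * (∫ v, f1 v * (v i * (v i - u12 i)))) :=
          Finset.sum_congr rfl (fun i _ => key i)
      _ = (d : ℝ) * (T12 * n1) - m1 * (∑ i : Fin d, ∫ v, f1 v * (v i * (v i - u12 i))) := by
          rw [Finset.sum_sub_distrib, Finset.sum_const, Finset.card_univ, Fintype.card_fin,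
            ← Finset.mul_sum, nsmul_eq_mul]
      _ = (d : ℝ) * (T12 * n1) - m1 * ((∫ v, f1 v * ‖v‖^2) - n1 * (inner ℝ u12 u1 : ℝ)) := by
          rw [hsumM]
  rw [hsum, inner_sub_right, real_inner_self_eq_norm_sq, real_inner_comm u12 u1]
  linear_combination (-(c12 * n2)) * hmom2

end
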